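/- Let a, b, c be pairwise distinct complex numbers and x, y complex numbers. Then |(x-a)(y-a)|/(|b-a||c-a|) − |(x-b)(y-b)|/(|a-b||c-b|) − |(x-c)(y-c)|/(|a-c||b-c|) = 1 holds if and only if (x-a)(y-a)/((b-a)(c-a)) is a nonnegative real and both (x-b)(y-b)/((a-b)(c-b)) and (x-c)(y-c)/((a-c)(b-c)) are nonpositive reals. -/

import Mathlib

open Complex

lemma key_aux (u v w : ℂ) (hsum : u + v + w = 1) :
    ‖u‖ - ‖v‖ - ‖w‖ = 1 ↔
    (∃ r : ℝ, 0 ≤ r ∧ u = (r : ℂ)) ∧ (∃ r : ℝ, r ≤ 0 ∧ v = (r : ℂ)) ∧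
      (∃ r : ℝ, r ≤ 0 ∧ w = (r : ℂ)) := by
  constructor
  · intro h
    have h1 : ‖u‖ = 1 + ‖v‖ + ‖w‖ := by
      linarith
    have hu : u = 1 + -(v + w) := by linear_combination hsum
    have htri : ‖u‖ ≤ 1 + ‖v + w‖ := by
      calc ‖u‖ = ‖(1 : ℂ) + -(v + w)‖ := by rw [← hu]
        _ ≤ ‖(1 : ℂ)‖ + ‖-(v + w)‖ := norm_add_le _ _
        _ = 1 + ‖v + w‖ := by rw [norm_one, norm_neg]
    have e1 : ‖v + w‖ = ‖v‖ + ‖w‖ :=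
      le_antisymm (norm_add_le _ _) (by linarith)
    have e2 : ‖(1 : ℂ) + -(v + w)‖ = ‖(1 : ℂ)‖ + ‖-(v + w)‖ := by
      rw [← hu, h1, norm_one, norm_neg, e1]; ring
    have sr1 : SameRay ℝ (1 : ℂ) (-(v + w)) := sameRay_iff_norm_add.2 e2
    obtain ⟨r, hr, hru⟩ := sr1.exists_nonneg_left one_ne_zero
    have hvw : v + w = -(r : ℂ) := by
      have h' : (r : ℂ) = -(v + w) := by simpa [Complex.real_smul] using hru
      linear_combination h'
    have sr2 : SameRay ℝ v w := sameRay_iff_norm_add.2 e1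
    obtain ⟨p, q, hp, hq, hpq, hv, hw⟩ := sr2.exists_eq_smul_add
    refine ⟨⟨1 + r, by linarith, ?_⟩, ⟨-(p * r), by nlinarith, ?_⟩,
      ⟨-(q * r), by nlinarith, ?_⟩⟩
    · rw [hu, hvw]; push_cast; ring
    · rw [hv, hvw, Complex.real_smul]; push_cast; ring
    · rw [hw, hvw, Complex.real_smul]; push_cast; ring
  · rintro ⟨⟨r, hr, hru⟩, ⟨s, hs, hsv⟩, ⟨t, ht, htw⟩⟩
    rw [hru, hsv, htw] at hsum ⊢
    have hrst : r + s + t = 1 := by exact_mod_cast hsum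
    simp only [Complex.norm_real, Real.norm_eq_abs]
    rw [_root_.abs_of_nonneg hr, _root_.abs_of_nonpos hs, _root_.abs_of_nonpos ht]
    linarith

theorem stmt_4 (a b c x y : ℂ) (hab : a ≠ b) (hac : a ≠ c) (hbc : b ≠ c) :
    (‖(x - a) * (y - a)‖ / (‖b - a‖ * ‖c - a‖) -
     ‖(x - b) * (y - b)‖ / (‖a - b‖ * ‖c - b‖) -
     ‖(x - c) * (y - c)‖ / (‖a - c‖ * ‖b - c‖) = 1) ↔
    ((∃ r : ℝ, 0 ≤ r ∧ (x - a) * (y - a) / ((b - a) * (c - a)) = (r : ℂ)) ∧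
     (∃ r : ℝ, r ≤ 0 ∧ (x - b) * (y - b) / ((a - b) * (c - b)) = (r : ℂ)) ∧
     (∃ r : ℝ, r ≤ 0 ∧ (x - c) * (y - c) / ((a - c) * (b - c)) = (r : ℂ))) := by
  have hba : b - a ≠ 0 := sub_ne_zero.2 hab.symm
  have hca : c - a ≠ 0 := sub_ne_zero.2 hac.symm
  have hab' : a - b ≠ 0 := sub_ne_zero.2 hab
  have hcb : c - b ≠ 0 := sub_ne_zero.2 hbc.symm
  have hac' : a - c ≠ 0 := sub_ne_zero.2 hac
  have hbc' : b - c ≠ 0 := sub_ne_zero.2 hbc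
  set u := (x - a) * (y - a) / ((b - a) * (c - a)) with hu
  set v := (x - b) * (y - b) / ((a - b) * (c - b)) with hv
  set w := (x - c) * (y - c) / ((a - c) * (b - c)) with hw
  have hsum : u + v + w = 1 := by
    rw [hu, hv, hw]
    field_simp
    ring
  have h1 : ‖(x - a) * (y - a)‖ / (‖b - a‖ * ‖c - a‖)
      = ‖u‖ := by rw [hu]; simp [map_div₀, map_mul]
  have h2 : ‖(x - b) * (y - b)‖ / (‖a - b‖ * ‖c - b‖)
      = ‖v‖ := by rw [hv]; simp [map_div₀, map_mul]
  have h3 : ‖(x - c) * (y - c)‖ / (‖a - c‖ * ‖b - c‖)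
      = ‖w‖ := by rw [hw]; simp [map_div₀, map_mul]
  rw [h1, h2, h3]
  exact key_aux u v w hsum
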